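/- arXiv:2105.14299 — 10 statements merged into one kernel-verified Lean document; each statement's English description precedes it below -/
import Mathlib

section
/- Let λ : ℝ and ψ ≠ 0 with A ψ = λ • ψ. Suppose B : H →L[ℂ] H is a left inverse of (λ + i s) • 1 − A_s, i.e. B (((λ + i s) • x) − A_s x) = x for all x ∈ H. Then ‖ψ‖ ≤ s · ‖B‖ · ‖ψ − P ψ‖. (This is the core resolvent estimate in the proof of Theorem 2.2: since (λ + i s − L_s)ψ = i s χ_{Ω∖R} ψ, the norm of the resolvent at λ + i s is at least ‖ψ‖/(s‖ψ‖_{L²(Ω∖R)}).) -/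
/-- Core resolvent estimate in the proof of Theorem 2.2: if `A ψ = λ ψ`, `ψ ≠ 0`, and
`B` is a left inverse of `(λ + i s) - A_s`, then `‖ψ‖ ≤ s ‖B‖ ‖ψ - P ψ‖`. -/
theorem stmt3 {H : Type*} [NormedAddCommGroup H] [InnerProductSpace ℂ H] [CompleteSpace H]
    (A P : H →L[ℂ] H) (hA : IsSelfAdjoint A) (hP : IsSelfAdjoint P) (hP2 : P ∘L P = P)
    (s : ℝ) (hs : 0 < s) (lam : ℝ) (ψ : H) (hψ : ψ ≠ 0) (heig : A ψ = (lam : ℂ) • ψ)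
    (B : H →L[ℂ] H)
    (hB : ∀ x : H, B ((((lam : ℂ) + s * Complex.I) • x) - (A x + (s * Complex.I) • P x)) = x) :
    ‖ψ‖ ≤ s * ‖B‖ * ‖ψ - P ψ‖ := by
  have key : ((((lam : ℂ) + s * Complex.I) • ψ) - (A ψ + (s * Complex.I) • P ψ))
      = ((s : ℂ) * Complex.I) • (ψ - P ψ) := by
    rw [heig]
    module
  have h1 : B (((s : ℂ) * Complex.I) • (ψ - P ψ)) = ψ := by
    rw [← key]; exact hB ψ
  have h2 : ψ = ((s : ℂ) * Complex.I) • B (ψ - P ψ) := by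
    conv_lhs => rw [← h1, map_smul]
  calc ‖ψ‖ = ‖((s : ℂ) * Complex.I)‖ * ‖B (ψ - P ψ)‖ := by
        conv_lhs => rw [h2, norm_smul]
    _ = s * ‖B (ψ - P ψ)‖ := by
        simp [norm_mul, Complex.norm_real, abs_of_nonneg hs.le]
    _ ≤ s * (‖B‖ * ‖ψ - P ψ‖) := by
        exact mul_le_mul_of_nonneg_left (B.le_opNorm _) hs.le
    _ = s * ‖B‖ * ‖ψ - P ψ‖ := by ring
end

section
/- (Theorem 2.2, estimate (2.2)) Assume in addition that A_s is star-normal (it commutes with its adjoint), as the paper asserts for L_s; for a normal operator the norm of the resolvent at a point equals the reciprocal of the distance to the spectrum. Let λ : ℝ and ψ ≠ 0 with A ψ = λ • ψ. Then the distance from the complex number λ + i s to the spectrum of A_s satisfies Metric.infDist (λ + i s) (spectrum ℂ A_s) ≤ s · ‖ψ − P ψ‖ / ‖ψ‖ = s · δ(ψ). -/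
lemma aux_normal_sub {R : Type*} [Ring R] [Algebra ℂ R] [StarRing R] [StarModule ℂ R]
    (z : ℂ) (a : R) (ha : IsStarNormal a) :
    IsStarNormal (algebraMap ℂ R z - a) := by
  constructor
  have h : star a * a = a * star a := ha.star_comm_self
  have c1 := Algebra.commutes (A := R) (star z) a
  have c2 := Algebra.commutes (A := R) z (star a)
  unfold Commute SemiconjBy
  rw [star_sub, ← algebraMap_star_comm]
  simp only [sub_mul, mul_sub, ← map_mul, h, c1, c2, mul_comm]
  abel

/-- Theorem 2.2, estimate (2.2): if `A_s = A + i s P` is star-normal and `A ψ = λ ψ`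
with `ψ ≠ 0`, then `dist(λ + i s, Spec(A_s)) ≤ s ‖ψ - P ψ‖ / ‖ψ‖ = s δ(ψ)`. -/
theorem stmt4 {H : Type*} [NormedAddCommGroup H] [InnerProductSpace ℂ H] [CompleteSpace H]
    (A P : H →L[ℂ] H) (hA : IsSelfAdjoint A) (hP : IsSelfAdjoint P) (hP2 : P ∘L P = P)
    (s : ℝ) (hs : 0 < s)
    (hnormal : IsStarNormal (A + (s * Complex.I) • P))
    (lam : ℝ) (ψ : H) (hψ : ψ ≠ 0) (heig : A ψ = (lam : ℂ) • ψ) :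
    Metric.infDist ((lam : ℂ) + s * Complex.I) (spectrum ℂ (A + (s * Complex.I) • P))
      ≤ s * ‖ψ - P ψ‖ / ‖ψ‖ := by
  have hHnt : Nontrivial H := nontrivial_of_ne ψ 0 hψ
  set T : H →L[ℂ] H := A + (s * Complex.I) • P with hT
  set z : ℂ := (lam : ℂ) + s * Complex.I with hz
  have hψpos : (0:ℝ) < ‖ψ‖ := norm_pos_iff.mpr hψ
  have hc : 0 ≤ s * ‖ψ - P ψ‖ / ‖ψ‖ := by positivity
  set b : H →L[ℂ] H := algebraMap ℂ (H →L[ℂ] H) z - T with hb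
  clear_value b
  have hbψ : b ψ = (↑s * Complex.I) • (ψ - P ψ) := by
    rw [hb]
    simp [hT, hz, heig, add_smul, smul_sub]
    rw [mul_smul]
    exact smul_comm _ _ _
  have hbnorm : ‖b ψ‖ = s * ‖ψ - P ψ‖ := by
    rw [hbψ, norm_smul]
    simp [Complex.norm_of_nonneg hs.le, abs_of_pos hs]
  by_cases hzmem : z ∈ spectrum ℂ T
  · calc Metric.infDist z (spectrum ℂ T) ≤ dist z z := Metric.infDist_le_dist_of_mem hzmem
    _ ≤ _ := by simp [hc]
  · have hu : IsUnit b := by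
      rw [spectrum.notMem_iff] at hzmem; rw [hb]; exact hzmem
    have hbnormal : IsStarNormal b := by rw [hb]; exact aux_normal_sub z T hnormal
    set R : H →L[ℂ] H := Ring.inverse b with hR
    clear_value R
    have hRnormal : IsStarNormal R := by
      constructor
      have h2 := hbnormal.star_comm_self
      rw [hR, ← Ring.inverse_star]
      exact h2.ringInverse_ringInverse
    have hRu : IsUnit R := by rw [hR]; exact hu.ringInverse
    obtain ⟨w, hw, hwr⟩ := spectrum.exists_nnnorm_eq_spectralRadius (a := R)
    haveI := hRnormal
    have hrad : spectralRadius ℂ R = (‖R‖₊ : ENNReal) :=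
      IsStarNormal.spectralRadius_eq_nnnorm R
    have hwnorm : ‖w‖ = ‖R‖ := by
      have h3 := hwr.trans hrad
      exact_mod_cast congrArg ENNReal.toReal h3
    have hw0 : w ≠ 0 := by
      intro h
      rw [h, spectrum.zero_mem_iff] at hw
      exact hw hRu
    have hRinv : R = ↑hu.unit⁻¹ := by
      rw [hR, ← Ring.inverse_unit hu.unit, hu.unit_spec]
    have hwin : w⁻¹ ∈ spectrum ℂ b := by
      have h4 : ((Units.mk0 w hw0 : ℂˣ) : ℂ) ∈
          spectrum ℂ ((hu.unit⁻¹ : (H →L[ℂ] H)ˣ) : H →L[ℂ] H) := by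
        rwa [← hRinv]
      have h5 := spectrum.inv_mem_iff.mp h4
      simpa [hu.unit_spec] using h5
    have hmem : z - w⁻¹ ∈ spectrum ℂ T := by
      rw [hb, ← spectrum.singleton_sub_eq] at hwin
      obtain ⟨x, hx, y, hy, hxy⟩ := hwin
      simp only [Set.mem_singleton_iff] at hx
      subst hx
      have h6 : y = z - w⁻¹ := by rw [← hxy]; ring
      rwa [← h6]
    have hkey : ‖ψ‖ ≤ ‖R‖ * (s * ‖ψ - P ψ‖) := by
      have h7 : R (b ψ) = ψ := by
        have h8 : (R * b) = 1 := by rw [hR]; exact Ring.inverse_mul_cancel b hu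
        calc R (b ψ) = (R * b) ψ := rfl
        _ = ψ := by rw [h8]; rfl
      calc ‖ψ‖ = ‖R (b ψ)‖ := by rw [h7]
      _ ≤ ‖R‖ * ‖b ψ‖ := R.le_opNorm _
      _ = ‖R‖ * (s * ‖ψ - P ψ‖) := by rw [hbnorm]
    have hRpos : (0:ℝ) < ‖R‖ := by
      rcases eq_or_lt_of_le (norm_nonneg R) with h9 | h9
      · exfalso
        have : R = 0 := by
          rwa [eq_comm, norm_eq_zero] at h9
        rw [this] at hkey
        simp at hkey
        exact hψ hkey
      · exact h9
    calc Metric.infDist z (spectrum ℂ T) ≤ dist z (z - w⁻¹) :=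
          Metric.infDist_le_dist_of_mem hmem
      _ = ‖w‖⁻¹ := by
          rw [dist_eq_norm]
          simp [norm_inv]
      _ = ‖R‖⁻¹ := by rw [hwnorm]
      _ ≤ s * ‖ψ - P ψ‖ / ‖ψ‖ := by
          rw [inv_le_iff_one_le_mul₀ hRpos, div_mul_eq_mul_div, le_div_iff₀ hψpos, one_mul]
          linarith [hkey]
end

section
/- (Theorem 2.4, lower bound in (2.5)) Let (μ, φ) be an eigenpair of A_s with ‖φ‖ = 1, and write δ = ‖φ − P φ‖. Then for every real t one has s · δ² ≤ |(t + i s) − μ| (absolute value in ℂ); consequently s · δ² ≤ Metric.infDist μ ((fun t : ℝ => (t : ℂ) + s * Complex.I) '' spectrum ℝ A), i.e. μ is at distance at least s δ(φ)² from the shifted spectrum Spec(A) + i s (the spectrum of A is nonempty since φ ≠ 0 forces H ≠ 0). -/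
/-- Theorem 2.4, lower bound in (2.5): for an eigenpair `(μ, φ)` of `A_s` with `‖φ‖ = 1`
and `δ = ‖φ - P φ‖`, one has `s δ² ≤ |(t + i s) - μ|` for every real `t`, hence
`s δ² ≤ dist(μ, Spec_ℝ(A) + i s)`. -/
theorem stmt7 {H : Type*} [NormedAddCommGroup H] [InnerProductSpace ℂ H] [CompleteSpace H]
    (A P : H →L[ℂ] H) (hA : IsSelfAdjoint A) (hP : IsSelfAdjoint P) (hP2 : P ∘L P = P)
    (s : ℝ) (hs : 0 < s) (μ : ℂ) (φ : H) (hφ : ‖φ‖ = 1)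
    (heig : A φ + (s * Complex.I) • P φ = μ • φ) :
    (∀ t : ℝ, s * ‖φ - P φ‖ ^ 2 ≤ ‖(t : ℂ) + s * Complex.I - μ‖) ∧
      s * ‖φ - P φ‖ ^ 2 ≤
        Metric.infDist μ ((fun t : ℝ => (t : ℂ) + s * Complex.I) '' spectrum ℝ A) := by
  have hφ0 : φ ≠ 0 := by intro h; simp [h] at hφ
  have hPadj : ContinuousLinearMap.adjoint P = P := ContinuousLinearMap.isSelfAdjoint_iff'.mp hP
  have hAadj : ContinuousLinearMap.adjoint A = A := ContinuousLinearMap.isSelfAdjoint_iff'.mp hA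
  have hPinner : (inner ℂ φ (P φ) : ℂ) = (‖P φ‖ : ℂ) ^ 2 := by
    have h1 : (inner ℂ φ (P φ) : ℂ) = inner ℂ φ (P (P φ)) := by
      rw [← ContinuousLinearMap.comp_apply, hP2]
    rw [h1, ← ContinuousLinearMap.adjoint_inner_left P (P φ) φ, hPadj,
      inner_self_eq_norm_sq_to_K]
    norm_cast
  have hAreal : (inner ℂ φ (A φ) : ℂ).im = 0 := by
    have h2 : (inner ℂ (A φ) φ : ℂ) = inner ℂ φ (A φ) := by
      rw [← hAadj, ContinuousLinearMap.adjoint_inner_left, hAadj]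
    have h1 : (starRingEnd ℂ) (inner ℂ φ (A φ) : ℂ) = inner ℂ φ (A φ) := by
      rw [← inner_conj_symm] at h2
      exact h2
    exact Complex.conj_eq_iff_im.mp h1
  have hμ : μ = inner ℂ φ (A φ) + (s * Complex.I) * (‖P φ‖ : ℂ) ^ 2 := by
    have h1 : (inner ℂ φ (μ • φ) : ℂ) = μ := by
      rw [inner_smul_right, inner_self_eq_norm_sq_to_K, hφ]; push_cast; ring
    rw [← h1, ← heig, inner_add_right, inner_smul_right, hPinner]
  have hμim : μ.im = s * ‖P φ‖ ^ 2 := by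
    rw [hμ]
    simp [hAreal, ← Complex.ofReal_pow]
  have hdecomp : ‖φ - P φ‖ ^ 2 = 1 - ‖P φ‖ ^ 2 := by
    have h := @norm_sub_sq ℂ H _ _ _ φ (P φ)
    rw [h, hφ, hPinner]
    simp [← Complex.ofReal_pow]
    ring
  have hP1 : ‖P φ‖ ^ 2 ≤ 1 := by nlinarith [sq_nonneg ‖φ - P φ‖]
  have key : ∀ t : ℝ, s * ‖φ - P φ‖ ^ 2 ≤ ‖(t : ℂ) + s * Complex.I - μ‖ := by
    intro t
    have him : ((t : ℂ) + s * Complex.I - μ).im = s - s * ‖P φ‖ ^ 2 := by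
      simp [hμim]
    calc s * ‖φ - P φ‖ ^ 2 = s - s * ‖P φ‖ ^ 2 := by rw [hdecomp]; ring
      _ ≤ |((t : ℂ) + s * Complex.I - μ).im| := by rw [him]; exact le_abs_self _
      _ ≤ ‖_‖ := Complex.abs_im_le_norm _
  refine ⟨key, ?_⟩
  have : Nontrivial H := ⟨φ, 0, hφ0⟩
  have hspecC : (spectrum ℂ A).Nonempty := spectrum.nonempty A
  have hspec : (spectrum ℝ A).Nonempty := by
    rw [← hA.spectrumRestricts.image]
    exact hspecC.image _
  have hne : ((fun t : ℝ => (t : ℂ) + s * Complex.I) '' spectrum ℝ A).Nonempty :=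
    hspec.image _
  by_contra hlt
  push_neg at hlt
  obtain ⟨y, hy, hdy⟩ := (Metric.infDist_lt_iff hne).mp hlt
  obtain ⟨t, _, rfl⟩ := hy
  have : ‖(t : ℂ) + s * Complex.I - μ‖ < s * ‖φ - P φ‖ ^ 2 := by
    rw [Complex.dist_eq, norm_sub_rev] at hdy
    exact hdy
  exact absurd (key t) (not_le.mpr this)
end

section
/- (Theorem 2.4, upper bound in (2.5)) Let (μ, φ) be an eigenpair of A_s with ‖φ‖ = 1. Then the distance from μ to the spectrum of the shifted operator A + i s · 1 is at most s · ‖φ − P φ‖, i.e. Metric.infDist μ ((fun z => z + s * Complex.I) '' spectrum ℂ A) ≤ s · δ(φ). (The shifted operator A + i s · 1 is automatically normal since A is self-adjoint, which is what the proof's resolvent-norm identity requires.) -/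
/-- Theorem 2.4, upper bound in (2.5): for an eigenpair `(μ, φ)` of `A_s` with `‖φ‖ = 1`,
`dist(μ, Spec(A + i s)) ≤ s ‖φ - P φ‖ = s δ(φ)`. -/
theorem stmt8 {H : Type*} [NormedAddCommGroup H] [InnerProductSpace ℂ H] [CompleteSpace H]
    (A P : H →L[ℂ] H) (hA : IsSelfAdjoint A) (hP : IsSelfAdjoint P) (hP2 : P ∘L P = P)
    (s : ℝ) (hs : 0 < s) (μ : ℂ) (φ : H) (hφ : ‖φ‖ = 1)
    (heig : A φ + (s * Complex.I) • P φ = μ • φ) :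
    Metric.infDist μ ((fun z : ℂ => z + s * Complex.I) '' spectrum ℂ A)
      ≤ s * ‖φ - P φ‖ := by
  set r : ℝ := s * ‖φ - P φ‖ with hr_def
  have hr0 : 0 ≤ r := mul_nonneg hs.le (norm_nonneg _)
  by_contra hcon
  push_neg at hcon
  set lam : ℂ := μ - s * Complex.I with hlam
  set d : ℝ := Metric.infDist μ ((fun z : ℂ => z + s * Complex.I) '' spectrum ℂ A) with hd
  have hdr : r < d := hcon
  have hd0 : 0 < d := lt_of_le_of_lt hr0 hdr
  -- every point of spectrum A is far from lam
  have hfar : ∀ z ∈ spectrum ℂ A, d ≤ dist lam z := by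
    intro z hz
    have h1 : d ≤ dist μ (z + s * Complex.I) :=
      Metric.infDist_le_dist_of_mem ⟨z, hz, rfl⟩
    calc d ≤ dist μ (z + s * Complex.I) := h1
      _ = dist lam z := by
        rw [hlam, dist_eq_norm, dist_eq_norm]
        congr 1
        ring
  -- the operator T = lam • 1 - A
  set T : H →L[ℂ] H := algebraMap ℂ (H →L[ℂ] H) lam - A with hT
  -- lam is not in the spectrum of A
  have hnot : lam ∉ spectrum ℂ A := by
    intro h
    have := hfar lam h
    simp at this
    exact absurd (le_trans this (le_of_eq rfl)) (not_le.mpr hd0)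
  have hunit : IsUnit T := spectrum.notMem_iff.mp hnot
  set u : (H →L[ℂ] H)ˣ := hunit.unit with hu
  have huval : (u : H →L[ℂ] H) = T := hunit.unit_spec
  -- key computation : T φ = -(s*I) • (φ - P φ)
  have hTφ : T φ = -((s * Complex.I : ℂ) • (φ - P φ)) := by
    have : (algebraMap ℂ (H →L[ℂ] H) lam) φ = lam • φ := by
      simp [Algebra.algebraMap_eq_smul_one]
    rw [hT, ContinuousLinearMap.sub_apply, this, hlam, sub_smul, ← heig]
    simp [smul_sub]
    abel
  have hTφnorm : ‖T φ‖ = r := by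
    rw [hTφ, norm_neg, norm_smul, hr_def]
    congr 1
    simp
    exact hs.le
  -- T is star-normal, hence so is its inverse
  have hTstar : star T = algebraMap ℂ (H →L[ℂ] H) (starRingEnd ℂ lam) - A := by
    rw [hT, star_sub, hA.star_eq]
    congr 1
    simp [Algebra.algebraMap_eq_smul_one, star_smul]
  have hcomm : Commute (star T) T := by
    rw [hTstar, hT]
    have hca : ∀ (c : ℂ) (B : H →L[ℂ] H), Commute (algebraMap ℂ (H →L[ℂ] H) c) B :=
      fun c B => Algebra.commute_algebraMap_left c B
    exact Commute.sub_left (hca _ _) ((hca _ A).symm.sub_right (Commute.refl A))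
  have hnormalInv : IsStarNormal ((u⁻¹ : (H →L[ℂ] H)ˣ) : H →L[ℂ] H) := by
    constructor
    have h1 : Commute (star (u : H →L[ℂ] H)) (u : H →L[ℂ] H) := huval ▸ hcomm
    have h2 : Commute ((star u : (H →L[ℂ] H)ˣ) : H →L[ℂ] H) (u : H →L[ℂ] H) := by
      rwa [Units.coe_star]
    have h3 := (h2.units_inv_left).units_inv_right
    rwa [Units.coe_star_inv] at h3
  -- spectral radius bound for the inverse
  have hnormInv : ‖((u⁻¹ : (H →L[ℂ] H)ˣ) : H →L[ℂ] H)‖ ≤ d⁻¹ := by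
    haveI := hnormalInv
    have hrad : spectralRadius ℂ ((u⁻¹ : (H →L[ℂ] H)ˣ) : H →L[ℂ] H)
        = ‖((u⁻¹ : (H →L[ℂ] H)ˣ) : H →L[ℂ] H)‖₊ :=
      IsStarNormal.spectralRadius_eq_nnnorm _
    have hbound : spectralRadius ℂ ((u⁻¹ : (H →L[ℂ] H)ˣ) : H →L[ℂ] H)
        ≤ ENNReal.ofReal d⁻¹ := by
      rw [spectralRadius]
      refine iSup₂_le fun z hz => ?_
      have hz0 : z ≠ 0 := spectrum.ne_zero_of_mem_of_unit hz
      have hzinv : (z⁻¹ : ℂ) ∈ spectrum ℂ ((u : H →L[ℂ] H)) := by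
        have := (spectrum.inv_mem_iff (r := Units.mk0 z hz0) (a := u⁻¹)).mp hz
        simpa using this
      have : lam - z⁻¹ ∈ spectrum ℂ A := by
        rw [huval, hT, ← spectrum.singleton_sub_eq] at hzinv
        obtain ⟨x, hx, y, hy, hxy⟩ := hzinv
        simp at hx
        subst hx
        have : y ∈ spectrum ℂ A := hy
        have hy' : y = lam - z⁻¹ := by
          have : lam - y = z⁻¹ := by rw [← hxy]
          linear_combination -this
        rwa [← hy']
      have hdist := hfar _ this
      have hzpos : 0 < ‖z‖ := norm_pos_iff.mpr hz0
      have hd' : d ≤ ‖z‖⁻¹ := by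
        rw [Complex.dist_eq] at hdist
        simpa using hdist
      have hzle : ‖z‖ ≤ d⁻¹ := (le_inv_comm₀ hd0 hzpos).mp hd'
      calc (‖z‖₊ : ENNReal) = ENNReal.ofReal ‖z‖ :=
            (ofReal_norm z).symm
        _ ≤ ENNReal.ofReal d⁻¹ := ENNReal.ofReal_le_ofReal hzle
    rw [hrad] at hbound
    have h4 := ENNReal.toReal_mono ENNReal.ofReal_ne_top hbound
    simpa [ENNReal.toReal_ofReal (inv_nonneg.mpr hd0.le)] using h4
  -- conclude
  have hφ1 : (1 : ℝ) ≤ ‖((u⁻¹ : (H →L[ℂ] H)ˣ) : H →L[ℂ] H)‖ * r := by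
    have : ((u⁻¹ : (H →L[ℂ] H)ˣ) : H →L[ℂ] H) ((u : H →L[ℂ] H) φ) = φ := by
      rw [← ContinuousLinearMap.comp_apply, ← ContinuousLinearMap.mul_def,
        u.inv_mul, ContinuousLinearMap.one_apply]
    calc (1:ℝ) = ‖φ‖ := hφ.symm
      _ = ‖((u⁻¹ : (H →L[ℂ] H)ˣ) : H →L[ℂ] H) ((u : H →L[ℂ] H) φ)‖ := by rw [this]
      _ ≤ ‖((u⁻¹ : (H →L[ℂ] H)ˣ) : H →L[ℂ] H)‖ * ‖(u : H →L[ℂ] H) φ‖ :=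
          ContinuousLinearMap.le_opNorm _ _
      _ = ‖((u⁻¹ : (H →L[ℂ] H)ˣ) : H →L[ℂ] H)‖ * r := by rw [huval, hTφnorm]
  have : (1:ℝ) < 1 := by
    calc (1:ℝ) ≤ ‖((u⁻¹ : (H →L[ℂ] H)ˣ) : H →L[ℂ] H)‖ * r := hφ1
      _ ≤ d⁻¹ * r := by
          apply mul_le_mul_of_nonneg_right hnormInv hr0
      _ < d⁻¹ * d := by
          apply mul_lt_mul_of_pos_left hdr (inv_pos.mpr hd0)
      _ = 1 := inv_mul_cancel₀ hd0.ne'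
  exact absurd this (lt_irrefl 1)
end

section
/- (Theorem 2.4, estimate (2.6)) Let (μ, φ) be an eigenpair of A_s with ‖φ‖ = 1, and write δ = ‖φ − P φ‖, τ = ‖P φ‖. Then the distance from the real number Re μ to the real spectrum of A satisfies Metric.infDist (Re μ) (spectrum ℝ A) ≤ s · δ · τ. -/
open scoped InnerProductSpace ComplexConjugate Pointwise

/-- The `RCLike` coercion `ℝ → ℂ` agrees with `Complex.ofReal`. -/
lemma crc_ofReal : (RCLike.ofReal : ℝ → ℂ) = Complex.ofReal := rfl

/-- Key lemma: for a self-adjoint bounded operator `A` on a complex Hilbert space,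
a real number `lam` and a unit vector `x`, the distance from `lam` to the real
spectrum of `A` is at most `‖A x - lam • x‖`. -/
lemma key_dist_le {H : Type*} [NormedAddCommGroup H] [InnerProductSpace ℂ H] [CompleteSpace H]
    (A : H →L[ℂ] H) (hA : IsSelfAdjoint A) (lam : ℝ) (x : H) (hx : ‖x‖ = 1) :
    Metric.infDist lam (spectrum ℝ A) ≤ ‖A x - (lam : ℂ) • x‖ := by
  set d := Metric.infDist lam (spectrum ℝ A) with hd
  have hd0 : 0 ≤ d := Metric.infDist_nonneg
  set B : H →L[ℂ] H := A - algebraMap ℝ (H →L[ℂ] H) lam with hBdef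
  have halg : IsSelfAdjoint (algebraMap ℝ (H →L[ℂ] H) lam) := by
    rw [IsSelfAdjoint, Algebra.algebraMap_eq_smul_one, star_smul, star_trivial, star_one]
  have hB : IsSelfAdjoint B := hA.sub halg
  have hBx : B x = A x - (lam : ℂ) • x := by
    simp [hBdef, Algebra.algebraMap_eq_smul_one, Complex.real_smul]
  -- spectrum of B
  have hspecB : spectrum ℝ B = spectrum ℝ A - {lam} := (spectrum.sub_singleton_eq A lam).symm
  have hspec : ∀ t ∈ spectrum ℝ B, d ≤ |t| := by
    intro u hu
    rw [hspecB, Set.mem_sub] at hu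
    obtain ⟨a, ha, l, hl, hal⟩ := hu
    rw [Set.mem_singleton_iff] at hl
    rw [← hal, hl]
    calc d ≤ dist lam a := Metric.infDist_le_dist_of_mem ha
    _ = |a - lam| := by rw [Real.dist_eq, abs_sub_comm]
  -- positivity of B^2 - d^2
  have hpos : (0 : H →L[ℂ] H) ≤ cfc (fun t : ℝ => t ^ 2 - d ^ 2) B := by
    apply cfc_nonneg
    intro t ht
    have h1 := hspec t ht
    have h2 : d ^ 2 ≤ |t| ^ 2 := pow_le_pow_left₀ hd0 h1 2
    rw [sq_abs] at h2
    linarith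
  have hcfc : cfc (fun t : ℝ => t ^ 2 - d ^ 2) B = B ^ 2 - algebraMap ℝ (H →L[ℂ] H) (d ^ 2) := by
    rw [cfc_sub (fun t : ℝ => t ^ 2) (fun _ : ℝ => d ^ 2) B (by fun_prop) (by fun_prop),
      cfc_pow_id B 2, cfc_const (d ^ 2) B]
  rw [hcfc] at hpos
  have hposi : (B ^ 2 - algebraMap ℝ (H →L[ℂ] H) (d ^ 2)).IsPositive :=
    (ContinuousLinearMap.nonneg_iff_isPositive _).mp hpos
  have hinner := hposi.inner_nonneg_left x
  have hBsym := ContinuousLinearMap.isSelfAdjoint_iff_isSymmetric.mp hB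
  have hB2 : (B ^ 2) x = B (B x) := by
    rw [sq]; rfl
  have hre : RCLike.re ⟪(B ^ 2 - algebraMap ℝ (H →L[ℂ] H) (d ^ 2)) x, x⟫_ℂ
      = ‖B x‖ ^ 2 - d ^ 2 := by
    rw [ContinuousLinearMap.sub_apply, inner_sub_left, hB2]
    have h1 : ⟪B (B x), x⟫_ℂ = ⟪B x, B x⟫_ℂ := hBsym (B x) x
    have h2 : (algebraMap ℝ (H →L[ℂ] H) (d ^ 2)) x = ((d ^ 2 : ℝ) : ℂ) • x := by
      rw [Algebra.algebraMap_eq_smul_one, ContinuousLinearMap.smul_apply,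
        ContinuousLinearMap.one_apply]
      exact RCLike.real_smul_eq_coe_smul (K := ℂ) (d ^ 2) x
    have h3 : ⟪B x, B x⟫_ℂ - ((d ^ 2 : ℝ) : ℂ) * ⟪x, x⟫_ℂ
        = ((‖B x‖ ^ 2 - d ^ 2 : ℝ) : ℂ) := by
      rw [inner_self_eq_norm_sq_to_K (𝕜 := ℂ), inner_self_eq_norm_sq_to_K (𝕜 := ℂ), hx]
      simp only [crc_ofReal]
      push_cast
      ring
    rw [h1, h2, inner_smul_left, Complex.conj_ofReal, h3]
    exact RCLike.ofReal_re _
  replace hinner := (RCLike.nonneg_iff.mp hinner).1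
  rw [hre] at hinner
  have hnB : 0 ≤ ‖B x‖ := norm_nonneg _
  have : d ^ 2 ≤ ‖B x‖ ^ 2 := by linarith
  have hdB : d ≤ ‖B x‖ := by nlinarith
  rwa [hBx] at hdB

/-- Theorem 2.4, estimate (2.6): for an eigenpair `(μ, φ)` of `A_s` with `‖φ‖ = 1`,
`dist(Re μ, Spec_ℝ(A)) ≤ s δ τ` where `δ = ‖φ - P φ‖` and `τ = ‖P φ‖`. -/
theorem stmt9 {H : Type*} [NormedAddCommGroup H] [InnerProductSpace ℂ H] [CompleteSpace H]
    (A P : H →L[ℂ] H) (hA : IsSelfAdjoint A) (hP : IsSelfAdjoint P) (hP2 : P ∘L P = P)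
    (s : ℝ) (hs : 0 < s) (μ : ℂ) (φ : H) (hφ : ‖φ‖ = 1)
    (heig : A φ + (s * Complex.I) • P φ = μ • φ) :
    Metric.infDist μ.re (spectrum ℝ A) ≤ s * ‖φ - P φ‖ * ‖P φ‖ := by
  set t := ‖P φ‖ with ht
  set δ := ‖φ - P φ‖ with hδ
  -- ⟪φ, P φ⟫ = t^2
  have hPP : P (P φ) = P φ := by
    conv_rhs => rw [← hP2]
    rfl
  have hinnerP : ⟪φ, P φ⟫_ℂ = ((t ^ 2 : ℝ) : ℂ) := by
    rw [← hPP, ← hP.adjoint_eq, ContinuousLinearMap.adjoint_inner_right,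
      hP.adjoint_eq, inner_self_eq_norm_sq_to_K (𝕜 := ℂ)]
    push_cast
    rfl
  -- ⟪φ, A φ⟫ is real
  have hAsym := ContinuousLinearMap.isSelfAdjoint_iff_isSymmetric.mp hA
  have hArealconj : conj ⟪φ, A φ⟫_ℂ = ⟪φ, A φ⟫_ℂ := by
    rw [inner_conj_symm]
    exact hAsym φ φ
  have hAreal : ((⟪φ, A φ⟫_ℂ).re : ℂ) = ⟪φ, A φ⟫_ℂ := Complex.conj_eq_iff_re.mp hArealconj
  -- compute μ
  have hμ : μ = ⟪φ, A φ⟫_ℂ + (s * Complex.I) * ((t ^ 2 : ℝ) : ℂ) := by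
    have h1 : ⟪φ, A φ + (s * Complex.I) • P φ⟫_ℂ = ⟪φ, μ • φ⟫_ℂ := by rw [heig]
    rw [inner_add_right, inner_smul_right, inner_smul_right, hinnerP,
      inner_self_eq_norm_sq_to_K (𝕜 := ℂ), hφ] at h1
    simp only [RCLike.ofReal_one, Complex.ofReal_one, one_pow, mul_one] at h1
    exact h1.symm
  have hμre : (μ.re : ℂ) = ⟪φ, A φ⟫_ℂ := by
    have hr : μ.re = (⟪φ, A φ⟫_ℂ).re := by
      rw [hμ]
      simp [pow_two, Complex.add_re, Complex.mul_re]
    rw [hr, hAreal]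
  have hμim : μ - (μ.re : ℂ) = Complex.I * ((s : ℂ) * ((t ^ 2 : ℝ) : ℂ)) := by
    rw [hμre, hμ]
    ring
  -- A φ - μ.re • φ = (s * I) • ((t^2 : ℂ) • φ - P φ)
  have hvec : A φ - (μ.re : ℂ) • φ = (↑s * Complex.I) • (((t ^ 2 : ℝ) : ℂ) • φ - P φ) := by
    have h1 : A φ = μ • φ - (↑s * Complex.I) • P φ := by
      rw [← heig]; abel
    have h2 : (↑s * Complex.I * ((t ^ 2 : ℝ) : ℂ)) = μ - (μ.re : ℂ) := by
      rw [hμim]; ring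
    rw [h1, smul_sub, smul_smul, h2, sub_smul]
    abel
  -- norm computation
  have hnormv : ‖A φ - (μ.re : ℂ) • φ‖ = s * (δ * t) := by
    rw [hvec, norm_smul]
    have hsi : ‖(↑s * Complex.I : ℂ)‖ = s := by
      simp [abs_of_pos hs]
    rw [hsi]
    congr 1
    -- ‖(t^2 : ℂ) • φ - P φ‖ = δ * t
    have ht0 : 0 ≤ t := norm_nonneg _
    have hδ0 : 0 ≤ δ := norm_nonneg _
    have hre : RCLike.re ⟪((t ^ 2 : ℝ) : ℂ) • φ, P φ⟫_ℂ = t ^ 2 * t ^ 2 := by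
      rw [inner_smul_left, Complex.conj_ofReal, hinnerP, ← Complex.ofReal_mul]
      exact RCLike.ofReal_re _
    have e1 : ‖((t ^ 2 : ℝ) : ℂ) • φ - P φ‖ ^ 2 = t ^ 2 - t ^ 2 * t ^ 2 := by
      rw [norm_sub_sq (𝕜 := ℂ), hre, norm_smul, Complex.norm_real, Real.norm_eq_abs,
        abs_of_nonneg (sq_nonneg t), hφ, ← ht]
      ring
    have e2 : δ ^ 2 = 1 - t ^ 2 := by
      have hrePφ : RCLike.re ⟪φ, P φ⟫_ℂ = t ^ 2 := by
        rw [hinnerP]; exact RCLike.ofReal_re _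
      have h3 := norm_sub_sq (𝕜 := ℂ) φ (P φ)
      rw [hrePφ, hφ, ← ht, ← hδ] at h3
      rw [h3]; ring
    have e3 : ‖((t ^ 2 : ℝ) : ℂ) • φ - P φ‖ ^ 2 = (δ * t) ^ 2 := by
      rw [e1]; nlinarith [e2]
    have h4 : 0 ≤ ‖((t ^ 2 : ℝ) : ℂ) • φ - P φ‖ := norm_nonneg _
    have h5 : 0 ≤ δ * t := mul_nonneg hδ0 ht0
    calc ‖((t ^ 2 : ℝ) : ℂ) • φ - P φ‖
        = Real.sqrt (‖((t ^ 2 : ℝ) : ℂ) • φ - P φ‖ ^ 2) := (Real.sqrt_sq h4).symm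
      _ = Real.sqrt ((δ * t) ^ 2) := by rw [e3]
      _ = δ * t := Real.sqrt_sq h5
  calc Metric.infDist μ.re (spectrum ℝ A) ≤ ‖A φ - (μ.re : ℂ) • φ‖ :=
        key_dist_le A hA μ.re φ hφ
  _ = s * (δ * t) := hnormv
  _ = s * δ * t := by ring
end

section
/- Let (μ, φ) be an eigenpair of A_s with ‖φ‖ = 1, and write δ² = ‖φ − P φ‖², τ² = ‖P φ‖². Then A φ − (Re μ : ℂ) • φ = (s * Complex.I) • ((τ² : ℂ) • (φ − P φ) − (δ² : ℂ) • P φ). (This is the key identity (𝓛 − μ₁)φ = i s (τ² χ_{Ω∖R} φ − δ² χ_R φ) used in the proofs of Theorem 2.4 and Proposition 2.6.) -/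
open scoped InnerProductSpace


/-- The key identity `(A - Re μ) φ = i s (τ² (φ - P φ) - δ² P φ)` for an eigenpair
`(μ, φ)` of `A_s` with `‖φ‖ = 1`, where `τ² = ‖P φ‖²` and `δ² = ‖φ - P φ‖²`. -/
theorem stmt10 {H : Type*} [NormedAddCommGroup H] [InnerProductSpace ℂ H] [CompleteSpace H]
    (A P : H →L[ℂ] H) (hA : IsSelfAdjoint A) (hP : IsSelfAdjoint P) (hP2 : P ∘L P = P)
    (s : ℝ) (hs : 0 < s) (μ : ℂ) (φ : H) (hφ : ‖φ‖ = 1)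
    (heig : A φ + (s * Complex.I) • P φ = μ • φ) :
    A φ - (μ.re : ℂ) • φ =
      (s * Complex.I) •
        (((‖P φ‖ ^ 2 : ℝ) : ℂ) • (φ - P φ) - ((‖φ - P φ‖ ^ 2 : ℝ) : ℂ) • P φ) := by
  have hPP : P (P φ) = P φ := by
    conv_lhs => rw [← ContinuousLinearMap.comp_apply, hP2]
  -- inner product facts
  have hinner : ⟪P φ, φ⟫_ℂ = (‖P φ‖ ^ 2 : ℝ) := by
    calc ⟪P φ, φ⟫_ℂ = ⟪P (P φ), φ⟫_ℂ := by rw [hPP]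
      _ = ⟪P φ, P φ⟫_ℂ := hP.isSymmetric _ _
      _ = (‖P φ‖ ^ 2 : ℝ) := by rw [inner_self_eq_norm_sq_to_K]; norm_num
  have horth : ⟪P φ, φ - P φ⟫_ℂ = 0 := by
    rw [inner_sub_right, hinner, inner_self_eq_norm_sq_to_K]
    push_cast
    ring_nf
    simp
  -- Pythagoras: τ² + δ² = 1
  have hpyth : ‖P φ‖ ^ 2 + ‖φ - P φ‖ ^ 2 = 1 := by
    have := norm_add_sq_eq_norm_sq_add_norm_sq_of_inner_eq_zero _ _ horth
    rw [add_sub_cancel, hφ] at this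
    linarith
  -- μ = ⟪φ, A φ⟫ + i s τ²
  have hmu : μ = ⟪φ, A φ⟫_ℂ + (s * Complex.I) * (‖P φ‖ ^ 2 : ℝ) := by
    have h1 : ⟪φ, A φ + (s * Complex.I) • P φ⟫_ℂ = ⟪φ, μ • φ⟫_ℂ := by rw [heig]
    rw [inner_add_right, inner_smul_right, inner_smul_right,
      inner_self_eq_norm_sq_to_K, hφ, ← inner_conj_symm φ (P φ), hinner] at h1
    simpa using h1.symm
  have hAreal : (⟪φ, A φ⟫_ℂ).im = 0 := by
    have h0 : (⟪A φ, φ⟫_ℂ).im = 0 := by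
      have := hA.isSymmetric.conj_inner_sym φ φ
      rw [Complex.conj_eq_iff_im] at this
      exact this
    have h1 : ⟪φ, A φ⟫_ℂ = (starRingEnd ℂ) ⟪A φ, φ⟫_ℂ := (inner_conj_symm _ _).symm
    rw [h1, Complex.conj_im, h0, neg_zero]
  have hre : (μ.re : ℂ) = ⟪φ, A φ⟫_ℂ := by
    apply Complex.ext
    · rw [hmu]
      simp [Complex.add_re, Complex.mul_re, Complex.mul_im, Complex.ofReal_im,
        Complex.ofReal_re, pow_two]
    · simp [hAreal]
  -- finish
  have hAφ : A φ = μ • φ - (s * Complex.I) • P φ := by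
    rw [← heig]; abel
  have h2 : ((‖φ - P φ‖ ^ 2 : ℝ) : ℂ) = 1 - ((‖P φ‖ ^ 2 : ℝ) : ℂ) := by
    rw [show (‖φ - P φ‖ ^ 2 : ℝ) = 1 - ‖P φ‖ ^ 2 by linarith]; push_cast; ring
  rw [hAφ, hre, hmu, h2]
  module
end

section
/- (Proposition 2.6, residual bound (2.8)) Let C : H → H be a conjugation: an additive, conjugate-linear map (C (c • x) = (conj c) • C x) with C (C x) = x and ‖C x‖ = ‖x‖ for all x, which commutes with A and with P (C (A x) = A (C x) and C (P x) = P (C x)). Let (μ, φ) be an eigenpair of A_s with ‖φ‖ = 1, and define the real and imaginary parts φ₁ = (1/2 : ℂ) • (φ + C φ) and φ₂ = (−Complex.I/2) • (φ − C φ). Write τ = ‖P φ‖ and δ = ‖φ − P φ‖. Then ‖A φ₁ − (Re μ : ℂ) • φ₁‖² = s² · (τ⁴ · ‖φ₂ − P φ₂‖² + δ⁴ · ‖P φ₂‖²). -/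
open scoped InnerProductSpace

/-- Proposition 2.6, residual bound (2.8): with a conjugation `C` commuting with `A`
and `P`, an eigenpair `(μ, φ)` of `A_s` with `‖φ‖ = 1`, and real/imaginary parts
`φ₁ = (φ + C φ)/2`, `φ₂ = -i(φ - C φ)/2`, one has
`‖A φ₁ - (Re μ) φ₁‖² = s² (τ⁴ ‖φ₂ - P φ₂‖² + δ⁴ ‖P φ₂‖²)`. -/
theorem stmt12 {H : Type*} [NormedAddCommGroup H] [InnerProductSpace ℂ H] [CompleteSpace H]
    (A P : H →L[ℂ] H) (hA : IsSelfAdjoint A) (hP : IsSelfAdjoint P) (hP2 : P ∘L P = P)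
    (s : ℝ) (hs : 0 < s)
    (C : H → H)
    (hCadd : ∀ x y : H, C (x + y) = C x + C y)
    (hCsmul : ∀ (c : ℂ) (x : H), C (c • x) = (starRingEnd ℂ c) • C x)
    (hCinv : ∀ x : H, C (C x) = x)
    (hCnorm : ∀ x : H, ‖C x‖ = ‖x‖)
    (hCA : ∀ x : H, C (A x) = A (C x))
    (hCP : ∀ x : H, C (P x) = P (C x))
    (μ : ℂ) (φ : H) (hφ : ‖φ‖ = 1)
    (heig : A φ + (s * Complex.I) • P φ = μ • φ)
    (φ₁ φ₂ : H)
    (hφ₁ : φ₁ = (1 / 2 : ℂ) • (φ + C φ))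
    (hφ₂ : φ₂ = (-Complex.I / 2) • (φ - C φ)) :
    ‖A φ₁ - (μ.re : ℂ) • φ₁‖ ^ 2 =
      s ^ 2 * (‖P φ‖ ^ 4 * ‖φ₂ - P φ₂‖ ^ 2 + ‖φ - P φ‖ ^ 4 * ‖P φ₂‖ ^ 2) := by
  have hAsym : ∀ x y : H, ⟪A x, y⟫_ℂ = ⟪x, A y⟫_ℂ := fun x y => hA.isSymmetric x y
  have hPsym : ∀ x y : H, ⟪P x, y⟫_ℂ = ⟪x, P y⟫_ℂ := fun x y => hP.isSymmetric x y
  have hPP : ∀ x : H, P (P x) = P x := fun x => congrArg (fun T => T x) hP2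
  have hinnerP : ⟪φ, P φ⟫_ℂ = ((‖P φ‖ ^ 2 : ℝ) : ℂ) := by
    have h1 : ⟪φ, P φ⟫_ℂ = ⟪P φ, P φ⟫_ℂ := by
      conv_lhs => rw [← hPP φ]
      exact (hPsym φ (P φ)).symm
    rw [h1, inner_self_eq_norm_sq_to_K]
    norm_num
  have hAreal : (⟪φ, A φ⟫_ℂ).im = 0 := by
    have h1 : starRingEnd ℂ ⟪φ, A φ⟫_ℂ = ⟪φ, A φ⟫_ℂ := by
      rw [inner_conj_symm]; exact hAsym φ φ
    exact Complex.conj_eq_iff_im.mp h1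
  have hinner : ⟪φ, A φ⟫_ℂ + (s * Complex.I) * ((‖P φ‖ ^ 2 : ℝ) : ℂ) = μ := by
    have h := congrArg (fun y => ⟪φ, y⟫_ℂ) heig
    simp only [inner_add_right, inner_smul_right, hinnerP] at h
    rw [h, inner_self_eq_norm_sq_to_K, hφ]
    norm_num
  have him : μ.im = s * ‖P φ‖ ^ 2 := by
    have h := congrArg Complex.im hinner
    simp only [Complex.add_im, Complex.mul_im, Complex.mul_re, Complex.ofReal_re,
      Complex.ofReal_im, Complex.I_re, Complex.I_im, hAreal] at h
    simp at h
    linarith [h]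
  have hAφ : A φ = μ • φ - ((s : ℂ) * Complex.I) • P φ := by
    rw [← heig]; abel
  have hACφ : A (C φ) =
      ((μ.re : ℂ) - (μ.im : ℂ) * Complex.I) • C φ + ((s : ℂ) * Complex.I) • P (C φ) := by
    have h := congrArg C heig
    rw [hCadd, hCsmul, hCsmul, hCA, hCP] at h
    have hconjμ : starRingEnd ℂ μ = (μ.re : ℂ) - (μ.im : ℂ) * Complex.I := by
      simp [Complex.ext_iff]
    have hconjs : starRingEnd ℂ ((s : ℂ) * Complex.I) = -((s : ℂ) * Complex.I) := by
      simp [Complex.ext_iff]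
    rw [hconjμ, hconjs] at h
    rw [← h]; module
  have hμre : μ = (μ.re : ℂ) + (μ.im : ℂ) * Complex.I := (Complex.re_add_im μ).symm
  have key : A φ₁ - (μ.re : ℂ) • φ₁ = (s : ℂ) • P φ₂ - ((μ.im : ℂ)) • φ₂ := by
    rw [hφ₁, hφ₂]
    simp only [map_smul, map_add, map_sub]
    rw [hAφ, hACφ, hμre]
    match_scalars <;> (ring_nf; try simp [Complex.I_sq]; try ring)
  have key2 : A φ₁ - (μ.re : ℂ) • φ₁ =
      ((s * (1 - ‖P φ‖ ^ 2) : ℝ) : ℂ) • P φ₂ - ((s * ‖P φ‖ ^ 2 : ℝ) : ℂ) • (φ₂ - P φ₂) := by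
    rw [key, him]
    push_cast
    module
  have horth : ⟪((s * (1 - ‖P φ‖ ^ 2) : ℝ) : ℂ) • P φ₂,
      -(((s * ‖P φ‖ ^ 2 : ℝ) : ℂ) • (φ₂ - P φ₂))⟫_ℂ = 0 := by
    have h0 : ⟪P φ₂, φ₂ - P φ₂⟫_ℂ = 0 := by
      rw [inner_sub_right]
      have h1 : ⟪P φ₂, φ₂⟫_ℂ = ⟪φ₂, P φ₂⟫_ℂ := hPsym φ₂ φ₂
      have h2 : ⟪P φ₂, P φ₂⟫_ℂ = ⟪φ₂, P φ₂⟫_ℂ := by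
        have := hPsym φ₂ (P φ₂); rw [hPP] at this; exact this
      rw [h1, h2, sub_self]
    rw [inner_smul_left, inner_neg_right, inner_smul_right, h0]
    ring
  have hpyth : ‖A φ₁ - (μ.re : ℂ) • φ₁‖ ^ 2 =
      (s * (1 - ‖P φ‖ ^ 2)) ^ 2 * ‖P φ₂‖ ^ 2 + (s * ‖P φ‖ ^ 2) ^ 2 * ‖φ₂ - P φ₂‖ ^ 2 := by
    rw [key2, sub_eq_add_neg]
    have h := norm_add_sq_eq_norm_sq_add_norm_sq_of_inner_eq_zero _ _ horth
    rw [← pow_two, ← pow_two, ← pow_two] at h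
    rw [h, norm_smul, norm_neg, norm_smul]
    simp only [Complex.norm_real, Real.norm_eq_abs, mul_pow, sq_abs]
  have hδ : ‖φ - P φ‖ ^ 2 = 1 - ‖P φ‖ ^ 2 := by
    have h0 : ⟪P φ, φ - P φ⟫_ℂ = 0 := by
      rw [inner_sub_right]
      have h1 : ⟪P φ, φ⟫_ℂ = ⟪φ, P φ⟫_ℂ := hPsym φ φ
      have h2 : ⟪P φ, P φ⟫_ℂ = ⟪φ, P φ⟫_ℂ := by
        have := hPsym φ (P φ); rw [hPP] at this; exact this
      rw [h1, h2, sub_self]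
    have h := norm_add_sq_eq_norm_sq_add_norm_sq_of_inner_eq_zero _ _ h0
    rw [add_sub_cancel, hφ] at h
    nlinarith [h]
  rw [hpyth, ← hδ]
  ring
end

section
/- (Estimate (3.2)) Assume A_s is star-normal (it commutes with its adjoint), as the paper asserts for L_s. Let λ : ℝ and ψ ≠ 0 with A ψ = λ • ψ. Then the distance from the complex number λ (on the real axis) to the spectrum of A_s satisfies Metric.infDist (λ : ℂ) (spectrum ℂ A_s) ≤ s · ‖P ψ‖ / ‖ψ‖ = s · τ(ψ) = s · δ(ψ, Ω∖R). -/
/-- Estimate (3.2): if `A_s` is star-normal and `A ψ = λ ψ` with `ψ ≠ 0`, then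
`dist(λ, Spec(A_s)) ≤ s ‖P ψ‖ / ‖ψ‖ = s τ(ψ)`. -/
theorem stmt14 {H : Type*} [NormedAddCommGroup H] [InnerProductSpace ℂ H] [CompleteSpace H]
    (A P : H →L[ℂ] H) (hA : IsSelfAdjoint A) (hP : IsSelfAdjoint P) (hP2 : P ∘L P = P)
    (s : ℝ) (hs : 0 < s)
    (hnormal : IsStarNormal (A + (s * Complex.I) • P))
    (lam : ℝ) (ψ : H) (hψ : ψ ≠ 0) (heig : A ψ = (lam : ℂ) • ψ) :
    Metric.infDist (lam : ℂ) (spectrum ℂ (A + (s * Complex.I) • P))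
      ≤ s * ‖P ψ‖ / ‖ψ‖ := by
  set T : H →L[ℂ] H := A + (s * Complex.I) • P with hT
  set d := Metric.infDist (lam : ℂ) (spectrum ℂ T) with hd
  have hψpos : 0 < ‖ψ‖ := norm_pos_iff.mpr hψ
  have hrhs : 0 ≤ s * ‖P ψ‖ / ‖ψ‖ := by positivity
  rcases eq_or_lt_of_le (Metric.infDist_nonneg : 0 ≤ d) with h0 | hdpos
  · rw [hd, ← h0]; exact hrhs
  have hlam : (lam : ℂ) ∉ spectrum ℂ T := by
    intro hmem
    have := Metric.infDist_zero_of_mem hmem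
    rw [← hd] at this
    exact absurd this (ne_of_gt hdpos)
  have hunit : IsUnit (algebraMap ℂ (H →L[ℂ] H) (lam : ℂ) - T) :=
    spectrum.notMem_iff.mp hlam
  set u := hunit.unit with hu
  have huc : (u : H →L[ℂ] H) = algebraMap ℂ (H →L[ℂ] H) (lam : ℂ) - T := hunit.unit_spec
  set c := algebraMap ℂ (H →L[ℂ] H) (lam : ℂ) with hc
  have hstar : star (c - T) = c - star T := by
    rw [star_sub, hc, ← algebraMap_star_comm, Complex.star_def, Complex.conj_ofReal]
  have hTc : Commute (star T) T := hnormal.star_comm_self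
  haveI hnu : IsStarNormal ((u : H →L[ℂ] H)) := by
    rw [huc]
    constructor
    rw [hstar]
    have hcT : Commute c T := Algebra.commutes (lam : ℂ) T
    have hcS : Commute c (star T) := Algebra.commutes (lam : ℂ) (star T)
    exact ((Commute.refl c).sub_right hcT).sub_left (hcS.symm.sub_right hTc)
  haveI hni : IsStarNormal ((↑u⁻¹ : H →L[ℂ] H)) := by
    rw [← Ring.inverse_unit u]
    constructor
    rw [← Ring.inverse_star]
    exact Commute.ringInverse_ringInverse hnu.star_comm_self
  -- spectral radius bound for the inverse
  have hDnn : (0 : ℝ) ≤ d⁻¹ := le_of_lt (inv_pos.mpr hdpos)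
  set D : NNReal := ⟨d⁻¹, hDnn⟩ with hD
  have hspec : ∀ z ∈ spectrum ℂ ((↑u⁻¹ : H →L[ℂ] H)), ‖z‖ ≤ d⁻¹ := by
    intro z hz
    rw [← spectrum.map_inv u] at hz
    rw [Set.mem_inv] at hz
    rw [huc, ← spectrum.singleton_sub_eq] at hz
    obtain ⟨r, hr, μ, hμ, hzinv⟩ := hz
    rw [Set.mem_singleton_iff] at hr
    subst hr
    rcases eq_or_ne z 0 with rfl | hz0
    · simpa using hDnn
    have hdz : d ≤ ‖z⁻¹‖ := by
      rw [← hzinv]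
      have : ((lam : ℂ) - μ) = _ := rfl
      calc d ≤ dist (lam : ℂ) μ := Metric.infDist_le_dist_of_mem hμ
        _ = ‖(lam : ℂ) - μ‖ := by rw [dist_eq_norm]
    have : ‖z‖ = ‖z⁻¹‖⁻¹ := by rw [norm_inv, inv_inv]
    rw [this]
    exact inv_anti₀ hdpos hdz
  have hnorm_inv : ‖(↑u⁻¹ : H →L[ℂ] H)‖ ≤ d⁻¹ := by
    have hsr := IsStarNormal.spectralRadius_eq_nnnorm ((↑u⁻¹ : H →L[ℂ] H))
    have hle : spectralRadius ℂ ((↑u⁻¹ : H →L[ℂ] H)) ≤ (D : ENNReal) := by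
      rw [spectralRadius]
      refine iSup₂_le fun k hk => ?_
      have := hspec k hk
      exact ENNReal.coe_le_coe.mpr (by
        rw [← NNReal.coe_le_coe, coe_nnnorm]; exact this)
    rw [hsr] at hle
    have : ‖(↑u⁻¹ : H →L[ℂ] H)‖₊ ≤ D := by exact_mod_cast hle
    calc ‖(↑u⁻¹ : H →L[ℂ] H)‖ = (‖(↑u⁻¹ : H →L[ℂ] H)‖₊ : ℝ) := (coe_nnnorm _).symm
      _ ≤ (D : ℝ) := NNReal.coe_le_coe.mpr this
      _ = d⁻¹ := rfl
  -- evaluate u at ψ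
  have huψ : (u : H →L[ℂ] H) ψ = -(((s : ℂ) * Complex.I) • P ψ) := by
    rw [huc]
    simp only [ContinuousLinearMap.sub_apply, ContinuousLinearMap.add_apply,
      ContinuousLinearMap.smul_apply, hT, hc, Algebra.algebraMap_eq_smul_one,
      ContinuousLinearMap.smul_apply, ContinuousLinearMap.one_apply, heig]
    abel
  have hnormuψ : ‖(u : H →L[ℂ] H) ψ‖ = s * ‖P ψ‖ := by
    rw [huψ, norm_neg, norm_smul]
    simp [abs_of_pos hs]
  have hψeq : ψ = (↑u⁻¹ : H →L[ℂ] H) ((u : H →L[ℂ] H) ψ) := by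
    rw [← ContinuousLinearMap.mul_apply, u.inv_mul, ContinuousLinearMap.one_apply]
  have key : ‖ψ‖ ≤ d⁻¹ * (s * ‖P ψ‖) := by
    calc ‖ψ‖ = ‖(↑u⁻¹ : H →L[ℂ] H) ((u : H →L[ℂ] H) ψ)‖ := by rw [← hψeq]
      _ ≤ ‖(↑u⁻¹ : H →L[ℂ] H)‖ * ‖(u : H →L[ℂ] H) ψ‖ := ContinuousLinearMap.le_opNorm _ _
      _ ≤ d⁻¹ * (s * ‖P ψ‖) := by
          rw [hnormuψ]
          exact mul_le_mul_of_nonneg_right hnorm_inv (by positivity)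
  rw [le_div_iff₀ hψpos]
  calc d * ‖ψ‖ ≤ d * (d⁻¹ * (s * ‖P ψ‖)) := mul_le_mul_of_nonneg_left key (le_of_lt hdpos)
    _ = s * ‖P ψ‖ := by rw [← mul_assoc, mul_inv_cancel₀ (ne_of_gt hdpos : d ≠ 0), one_mul]
end

section
/- (Remark 3.2, second estimate in (3.3)) Define the complementary shifted operator Ã_s by Ã_s x = A x + (s * Complex.I) • (x − P x), abstracting L̃_s = L + i s χ_{Ω∖R}. Let (μ, φ) be an eigenpair of Ã_s with ‖φ‖ = 1, and write δ = ‖φ − P φ‖, τ = ‖P φ‖. Then the distance from Re μ to the real spectrum of A satisfies Metric.infDist (Re μ) (spectrum ℝ A) ≤ s · δ · τ. -/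
open ContinuousLinearMap Complex

local notation "⟪" x ", " y "⟫" => @inner ℂ _ _ x y

/-- Resolvent bound for self-adjoint operators: `dist(0, Spec_ℝ B) ‖x‖ ≤ ‖B x‖`. -/
lemma resolvent_bound_aux {H : Type*} [NormedAddCommGroup H] [InnerProductSpace ℂ H]
    [CompleteSpace H] (B : H →L[ℂ] H) (hB : IsSelfAdjoint B) (x : H) :
    Metric.infDist 0 (spectrum ℝ B) * ‖x‖ ≤ ‖B x‖ := by
  set d := Metric.infDist 0 (spectrum ℝ B) with hd
  rcases eq_or_lt_of_le (Metric.infDist_nonneg : (0:ℝ) ≤ d) with h0 | h0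
  · rw [hd, ← h0, zero_mul]; positivity
  have hmem : (0 : ℝ) ∉ spectrum ℝ B := fun h => by
    simp [hd, Metric.infDist_zero_of_mem h] at h0
  have hU : IsUnit B := spectrum.isUnit_of_zero_notMem ℝ hmem
  set u : (H →L[ℂ] H)ˣ := hU.unit with hu
  have huval : (u : H →L[ℂ] H) = B := hU.unit_spec
  have hmulinv : B * ((u⁻¹ : (H →L[ℂ] H)ˣ) : H →L[ℂ] H) = 1 := by
    rw [← huval]; exact u.mul_inv
  have hinvmul : ((u⁻¹ : (H →L[ℂ] H)ˣ) : H →L[ℂ] H) * B = 1 := by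
    rw [← huval]; exact u.inv_mul
  have hinv : IsSelfAdjoint ((u⁻¹ : (H →L[ℂ] H)ˣ) : H →L[ℂ] H) := by
    have h1 : star ((u⁻¹ : (H →L[ℂ] H)ˣ) : H →L[ℂ] H) * B = 1 := by
      calc star ((u⁻¹ : (H →L[ℂ] H)ˣ) : H →L[ℂ] H) * B
          = star (B * ((u⁻¹ : (H →L[ℂ] H)ˣ) : H →L[ℂ] H)) := by
            rw [star_mul, hB.star_eq]
        _ = 1 := by rw [hmulinv, star_one]
    have h2 : star ((u⁻¹ : (H →L[ℂ] H)ˣ) : H →L[ℂ] H)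
        = star ((u⁻¹ : (H →L[ℂ] H)ˣ) : H →L[ℂ] H)
          * (B * ((u⁻¹ : (H →L[ℂ] H)ˣ) : H →L[ℂ] H)) := by
      rw [hmulinv, mul_one]
    rw [IsSelfAdjoint, h2, ← mul_assoc, h1, one_mul]
  have hrad : spectralRadius ℝ ((u⁻¹ : (H →L[ℂ] H)ˣ) : H →L[ℂ] H) ≤ ENNReal.ofReal d⁻¹ := by
    apply iSup₂_le
    intro k hk
    have hk0 : k ≠ 0 := by
      rintro rfl
      exact spectrum.zero_notMem ℝ (u⁻¹).isUnit hk
    have hkinv : (k⁻¹ : ℝ) ∈ spectrum ℝ (u : H →L[ℂ] H) := by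
      have := (spectrum.inv_mem_iff (r := (Units.mk0 k hk0)⁻¹) (a := u)).mpr
      simpa using this (by simpa using hk)
    have hdk : d ≤ |k⁻¹| := by
      have := Metric.infDist_le_dist_of_mem (x := (0:ℝ)) (huval ▸ hkinv)
      simpa [Real.dist_eq, hd] using this
    have hkabs : |k| ≤ d⁻¹ := by
      rw [abs_inv] at hdk
      rw [← inv_inv |k|]
      exact inv_anti₀ h0 hdk
    calc (‖k‖₊ : ENNReal) = ENNReal.ofReal |k| := by
          rw [← Real.norm_eq_abs, ofReal_norm, enorm_eq_nnnorm]
      _ ≤ ENNReal.ofReal d⁻¹ := ENNReal.ofReal_le_ofReal hkabs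
  have hnorm : ‖((u⁻¹ : (H →L[ℂ] H)ˣ) : H →L[ℂ] H)‖ ≤ d⁻¹ := by
    have h1 : (‖((u⁻¹ : (H →L[ℂ] H)ˣ) : H →L[ℂ] H)‖₊ : ENNReal) ≤ ENNReal.ofReal d⁻¹ := by
      rw [← hinv.spectralRadius_eq_nnnorm, ← hinv.spectrumRestricts.spectralRadius_eq]
      exact hrad
    rw [← enorm_eq_nnnorm, ← ofReal_norm] at h1
    exact (ENNReal.ofReal_le_ofReal_iff (by positivity)).mp h1
  have hx : x = ((u⁻¹ : (H →L[ℂ] H)ˣ) : H →L[ℂ] H) (B x) := by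
    have h := congrFun (congrArg DFunLike.coe hinvmul) x
    simpa using h.symm
  have hle : ‖x‖ ≤ d⁻¹ * ‖B x‖ := by
    calc ‖x‖ = ‖((u⁻¹ : (H →L[ℂ] H)ˣ) : H →L[ℂ] H) (B x)‖ := by rw [← hx]
      _ ≤ ‖((u⁻¹ : (H →L[ℂ] H)ˣ) : H →L[ℂ] H)‖ * ‖B x‖ := le_opNorm _ _
      _ ≤ d⁻¹ * ‖B x‖ := mul_le_mul_of_nonneg_right hnorm (norm_nonneg _)
  calc d * ‖x‖ ≤ d * (d⁻¹ * ‖B x‖) := mul_le_mul_of_nonneg_left hle h0.le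
    _ = ‖B x‖ := by have hd0 : d ≠ 0 := h0.ne'; field_simp

/-- Remark 3.2, second estimate in (3.3): for an eigenpair `(μ, φ)` of the
complementary shifted operator `Ã_s = A + i s (1 - P)` with `‖φ‖ = 1`,
`dist(Re μ, Spec_ℝ(A)) ≤ s δ τ` where `δ = ‖φ - P φ‖`, `τ = ‖P φ‖`. -/
theorem stmt16 {H : Type*} [NormedAddCommGroup H] [InnerProductSpace ℂ H] [CompleteSpace H]
    (A P : H →L[ℂ] H) (hA : IsSelfAdjoint A) (hP : IsSelfAdjoint P) (hP2 : P ∘L P = P)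
    (s : ℝ) (hs : 0 < s) (μ : ℂ) (φ : H) (hφ : ‖φ‖ = 1)
    (heig : A φ + (s * Complex.I) • (φ - P φ) = μ • φ) :
    Metric.infDist μ.re (spectrum ℝ A) ≤ s * ‖φ - P φ‖ * ‖P φ‖ := by
  have hPsym := hP.isSymmetric
  have hAsym := hA.isSymmetric
  set δ := ‖φ - P φ‖ with hδ
  set τ := ‖P φ‖ with hτ
  have hPP : P (P φ) = P φ := by
    have := congrFun (congrArg DFunLike.coe hP2) φ
    simpa using this
  have horth : ⟪P φ, φ - P φ⟫ = 0 := by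
    have h1 : ⟪P φ, φ⟫ = ⟪P φ, P φ⟫ := by
      have h := hPsym (P φ) φ
      simp only [ContinuousLinearMap.coe_coe] at h
      rw [← h, hPP]
    rw [inner_sub_right, ← h1, sub_self]
  have hQ : ⟪φ, φ - P φ⟫ = ((δ^2 : ℝ) : ℂ) := by
    have hsum : P φ + (φ - P φ) = φ := by abel
    calc ⟪φ, φ - P φ⟫ = ⟪P φ + (φ - P φ), φ - P φ⟫ := by rw [hsum]
      _ = ⟪P φ, φ - P φ⟫ + ⟪φ - P φ, φ - P φ⟫ := inner_add_left _ _ _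
      _ = ((δ^2 : ℝ) : ℂ) := by
          rw [horth, zero_add, inner_self_eq_norm_sq_to_K, ← hδ]
          norm_cast
  have hpyth : δ^2 + τ^2 = 1 := by
    have h := norm_add_sq (𝕜 := ℂ) (P φ) (φ - P φ)
    have hsum : P φ + (φ - P φ) = φ := by abel
    rw [hsum, horth, hφ] at h
    simp at h
    linarith
  have h1 : ⟪φ, A φ⟫ + (↑s * I) * ((δ^2 : ℝ) : ℂ) = μ := by
    have h := congrArg (fun v => ⟪φ, v⟫) heig
    simp only [inner_add_right, inner_smul_right, hQ, inner_self_eq_norm_sq_to_K, hφ] at h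
    simpa using h
  have him0 : (⟪φ, A φ⟫).im = 0 := by
    have h2 : (starRingEnd ℂ) ⟪φ, A φ⟫ = ⟪φ, A φ⟫ := by
      calc (starRingEnd ℂ) ⟪φ, A φ⟫ = ⟪A φ, φ⟫ := inner_conj_symm _ _
        _ = ⟪φ, A φ⟫ := by simpa using hAsym φ φ
    exact Complex.conj_eq_iff_im.mp h2
  have him : μ.im = s * δ^2 := by
    rw [← h1, Complex.add_im, him0, zero_add]
    have hmi : (↑s * I * ((δ^2 : ℝ) : ℂ)) = ((s * δ^2 : ℝ) : ℂ) * I := by push_cast; ring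
    rw [hmi, Complex.mul_im]
    simp only [Complex.ofReal_re, Complex.ofReal_im, Complex.I_re, Complex.I_im]
    ring
  have hμt : μ - (μ.re : ℂ) = ((s * δ^2 : ℝ) : ℂ) * I := by
    apply Complex.ext
    · simp only [Complex.sub_re, Complex.ofReal_re, Complex.mul_re, Complex.I_re,
        Complex.I_im, Complex.ofReal_im]
      ring
    · simp only [Complex.sub_im, Complex.ofReal_im, Complex.mul_im, Complex.I_re,
        Complex.I_im, Complex.ofReal_re, Complex.ofReal_im]
      linarith [him]
  have h3 : (↑s * I) * ((δ^2 : ℝ) : ℂ) = μ - (μ.re : ℂ) := by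
    rw [hμt]; push_cast; ring
  set B := A - algebraMap ℝ (H →L[ℂ] H) μ.re with hB
  have hBsa : IsSelfAdjoint B := by
    refine hA.sub ?_
    rw [IsSelfAdjoint, Algebra.algebraMap_eq_smul_one, star_smul, star_one, star_trivial]
  have hApp : B φ = A φ - (μ.re : ℂ) • φ := by
    rw [hB]
    simp [Algebra.algebraMap_eq_smul_one]
  have hA' : A φ = μ • φ - (↑s * I) • (φ - P φ) := by
    rw [← heig]; abel
  have key : (↑s * I) • (((δ^2 : ℝ) : ℂ) • φ - (φ - P φ))
      = (μ - (μ.re : ℂ)) • φ - (↑s * I) • (φ - P φ) := by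
    rw [smul_sub, smul_smul, h3]
  have hBφ : B φ = (↑s * I) • (((δ^2 : ℝ) : ℂ) • φ - (φ - P φ)) := by
    rw [hApp, hA', key, sub_smul]
    abel
  have hw : ‖(((δ^2 : ℝ) : ℂ) • φ - (φ - P φ))‖ ≤ δ * τ := by
    have hin : ⟪((δ^2 : ℝ) : ℂ) • φ, φ - P φ⟫ = ((δ^4 : ℝ) : ℂ) := by
      rw [inner_smul_left, hQ, Complex.conj_ofReal]
      push_cast
      ring
    have hns : ‖(((δ^2 : ℝ) : ℂ)) • φ‖ = δ^2 := by
      rw [norm_smul, hφ, mul_one, Complex.norm_real, Real.norm_eq_abs,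
        _root_.abs_of_nonneg (sq_nonneg δ)]
    have hsq : ‖(((δ^2 : ℝ) : ℂ) • φ - (φ - P φ))‖^2 = (δ * τ)^2 := by
      rw [norm_sub_sq (𝕜 := ℂ), hns, hin, ← hδ]
      simp only [RCLike.re_to_complex, Complex.ofReal_re]
      nlinarith [hpyth]
    nlinarith [hsq, norm_nonneg (((δ^2 : ℝ) : ℂ) • φ - (φ - P φ)),
      mul_nonneg (norm_nonneg (φ - P φ)) (norm_nonneg (P φ))]
  have hnormBφ : ‖B φ‖ ≤ s * (δ * τ) := by
    rw [hBφ, norm_smul]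
    have hsI : ‖(↑s * I : ℂ)‖ = s := by
      simp [abs_of_pos hs]
    rw [hsI]
    exact mul_le_mul_of_nonneg_left hw hs.le
  have hkey := resolvent_bound_aux B hBsa φ
  rw [hφ, mul_one] at hkey
  have hspec : spectrum ℝ B = (fun x : ℝ => x - μ.re) '' spectrum ℝ A := by
    rw [hB, ← spectrum.sub_singleton_eq]
    exact Set.sub_singleton
  have hiso : Isometry (fun x : ℝ => x - μ.re) := by
    apply Isometry.of_dist_eq
    intro a b
    rw [Real.dist_eq, Real.dist_eq]
    congr 1
    ring
  have htrans : Metric.infDist μ.re (spectrum ℝ A) = Metric.infDist 0 (spectrum ℝ B) := by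
    rw [hspec]
    have h := Metric.infDist_image (x := μ.re) (t := spectrum ℝ A) hiso
    simpa using h.symm
  rw [htrans]
  calc Metric.infDist 0 (spectrum ℝ B) ≤ ‖B φ‖ := hkey
    _ ≤ s * (δ * τ) := hnormBφ
    _ = s * δ * τ := by ring
end

section
/- (Proposition 1.1, landscape bound) Let Ω be a bounded open subset of ℝ^d, let V : ℝ^d → ℝ be continuous with V x ≥ 0 for x ∈ Ω, and let λ ≥ 0 be real. Let ψ, u : ℝ^d → ℝ be continuous on the closure of Ω and twice continuously differentiable on Ω, satisfying the eigenvalue equation −Δψ x + V x * ψ x = λ * ψ x for all x ∈ Ω with ψ = 0 on the frontier of Ω, and the landscape equation −Δu x + V x * u x = 1 for all x ∈ Ω with u = 0 on the frontier of Ω (here Δ is the Laplacian, the trace of the second derivative). Then for every x ∈ Ω, |ψ x| ≤ λ * u x * M, where M = sSup of |ψ| over the closure of Ω. -/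
/-- The Laplacian of `f : ℝ^d → ℝ` at `x`: the trace of the second derivative,
computed as the sum of the pure second partial derivatives along the standard
orthonormal basis of `EuclideanSpace ℝ (Fin d)`. -/
noncomputable def laplacian {d : ℕ} (f : EuclideanSpace ℝ (Fin d) → ℝ)
    (x : EuclideanSpace ℝ (Fin d)) : ℝ :=
  ∑ i : Fin d,
    fderiv ℝ (fun y => fderiv ℝ f y (EuclideanSpace.single i 1)) x
      (EuclideanSpace.single i 1)

open Filter Topology Set

lemma secondDeriv_nonneg_of_localMin {φ : ℝ → ℝ} {a : ℝ}
    (hmin : IsLocalMin φ 0)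
    (hd : ∀ᶠ t in 𝓝 (0:ℝ), DifferentiableAt ℝ φ t)
    (hd2 : HasDerivAt (deriv φ) a 0) : 0 ≤ a := by
  by_contra hlt
  push_neg at hlt
  have h0 : deriv φ 0 = 0 := hmin.deriv_eq_zero
  have hslope : Tendsto (slope (deriv φ) 0) (𝓝[≠] 0) (𝓝 a) :=
    hasDerivAt_iff_tendsto_slope.mp hd2
  have hev : ∀ᶠ t in 𝓝[≠] (0:ℝ), slope (deriv φ) 0 t < 0 :=
    hslope.eventually_lt_const hlt
  have hev' : ∀ᶠ t in 𝓝 (0:ℝ), t ≠ 0 → slope (deriv φ) 0 t < 0 :=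
    eventually_nhdsWithin_iff.mp hev
  have hall : ∀ᶠ t in 𝓝 (0:ℝ),
      DifferentiableAt ℝ φ t ∧ φ 0 ≤ φ t ∧ (t ≠ 0 → slope (deriv φ) 0 t < 0) :=
    hd.and (hmin.and hev')
  obtain ⟨δ, hδ, hδall⟩ := Metric.eventually_nhds_iff.mp hall
  set b := δ / 2 with hb
  have hb0 : 0 < b := by positivity
  have hmem : ∀ t ∈ Icc (0:ℝ) b, dist t 0 < δ := by
    intro t ht
    rw [Real.dist_eq, sub_zero, abs_of_nonneg ht.1]
    calc t ≤ b := ht.2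
    _ < δ := by simp [hb]; linarith
  have hcont : ContinuousOn φ (Icc 0 b) := fun t ht =>
    ((hδall (hmem t ht)).1.continuousAt).continuousWithinAt
  have hder : ∀ t ∈ Ioo (0:ℝ) b, HasDerivAt φ (deriv φ t) t := by
    intro t ht
    exact ((hδall (hmem t ⟨le_of_lt ht.1, le_of_lt ht.2⟩)).1).hasDerivAt
  obtain ⟨c, hc, hceq⟩ := exists_hasDerivAt_eq_slope φ (deriv φ) hb0 hcont hder
  have hcb : dist c 0 < δ := hmem c ⟨le_of_lt hc.1, le_of_lt hc.2⟩
  have hφb : φ 0 ≤ φ b := (hδall (hmem b ⟨le_of_lt hb0, le_refl b⟩)).2.1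
  have hge : 0 ≤ deriv φ c := by
    rw [hceq]
    apply div_nonneg <;> linarith
  have hneg : slope (deriv φ) 0 c < 0 := (hδall hcb).2.2 (ne_of_gt hc.1)
  rw [slope_def_field, h0, sub_zero, sub_zero] at hneg
  have := div_nonneg hge (le_of_lt hc.1)
  linarith

lemma diffAt_fderiv_apply {E : Type*} [NormedAddCommGroup E] [NormedSpace ℝ E]
    {f : E → ℝ} {x : E} (hf : ContDiffAt ℝ 2 f x) (v : E) :
    DifferentiableAt ℝ (fun y => fderiv ℝ f y v) x := by
  have h1 : ContDiffAt ℝ 1 (fderiv ℝ f) x := hf.fderiv_right (by norm_num)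
  exact (ContinuousLinearMap.apply ℝ ℝ v).differentiableAt.comp x (h1.differentiableAt one_ne_zero)

lemma second_directional_nonneg {E : Type*} [NormedAddCommGroup E] [NormedSpace ℝ E]
    {f : E → ℝ} {x : E} (hf : ∀ᶠ y in 𝓝 x, ContDiffAt ℝ 2 f y)
    (hmin : IsLocalMin f x) (v : E) :
    0 ≤ fderiv ℝ (fun y => fderiv ℝ f y v) x v := by
  set L : ℝ → E := fun t => x + t • v with hL
  have hL0 : L 0 = x := by simp [hL]
  have hLd : ∀ t : ℝ, HasDerivAt L v t := by
    intro t
    simpa [hL] using ((hasDerivAt_id t).smul_const v).const_add x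
  have hLcont : Continuous L := by fun_prop
  have hLt : Tendsto L (𝓝 0) (𝓝 x) := by
    have := hLcont.tendsto 0
    rwa [hL0] at this
  set φ : ℝ → ℝ := fun t => f (L t) with hφ
  have hφmin : IsLocalMin φ 0 := by
    have h := hLt.eventually hmin
    simpa [hφ, hL0, IsLocalMin, IsMinFilter] using h
  have hDer : ∀ᶠ t in 𝓝 (0:ℝ), HasDerivAt φ (fderiv ℝ f (L t) v) t := by
    filter_upwards [hLt.eventually hf] with t ht
    exact (ht.differentiableAt two_ne_zero).hasFDerivAt.comp_hasDerivAt t (hLd t)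
  have hdφ : ∀ᶠ t in 𝓝 (0:ℝ), DifferentiableAt ℝ φ t :=
    hDer.mono fun t h => h.differentiableAt
  have hderiv_eq : deriv φ =ᶠ[𝓝 (0:ℝ)] fun t => fderiv ℝ f (L t) v :=
    hDer.mono fun t h => h.deriv
  set g : E → ℝ := fun y => fderiv ℝ f y v with hg
  have hgd : DifferentiableAt ℝ g x := diffAt_fderiv_apply hf.self_of_nhds v
  have hgder : HasDerivAt (fun t => g (L t)) (fderiv ℝ g x v) 0 := by
    have hgd' : HasFDerivAt g (fderiv ℝ g x) (L 0) := hL0 ▸ hgd.hasFDerivAt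
    exact hgd'.comp_hasDerivAt 0 (hLd 0)
  have hφ'' : HasDerivAt (deriv φ) (fderiv ℝ g x v) 0 :=
    hgder.congr_of_eventuallyEq hderiv_eq
  exact secondDeriv_nonneg_of_localMin hφmin hdφ hφ''

lemma laplacian_nonneg_localMin {d : ℕ} {f : EuclideanSpace ℝ (Fin d) → ℝ}
    {x : EuclideanSpace ℝ (Fin d)} (hf : ∀ᶠ y in 𝓝 x, ContDiffAt ℝ 2 f y)
    (hmin : IsLocalMin f x) : 0 ≤ laplacian f x :=
  Finset.sum_nonneg fun i _ => second_directional_nonneg hf hmin _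

lemma laplacian_combo {d : ℕ} {f g : EuclideanSpace ℝ (Fin d) → ℝ}
    {x : EuclideanSpace ℝ (Fin d)} (a b : ℝ)
    (hf : ∀ᶠ y in 𝓝 x, ContDiffAt ℝ 2 f y) (hg : ∀ᶠ y in 𝓝 x, ContDiffAt ℝ 2 g y) :
    laplacian (fun y => a * f y + b * g y) x = a * laplacian f x + b * laplacian g x := by
  have key : ∀ v : EuclideanSpace ℝ (Fin d),
      fderiv ℝ (fun y => fderiv ℝ (fun z => a * f z + b * g z) y v) x v
        = a * fderiv ℝ (fun y => fderiv ℝ f y v) x v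
          + b * fderiv ℝ (fun y => fderiv ℝ g y v) x v := by
    intro v
    have hEq : (fun y => fderiv ℝ (fun z => a * f z + b * g z) y v)
        =ᶠ[𝓝 x] fun y => a * fderiv ℝ f y v + b * fderiv ℝ g y v := by
      filter_upwards [hf, hg] with y hfy hgy
      have hfd := hfy.differentiableAt two_ne_zero
      have hgd := hgy.differentiableAt two_ne_zero
      rw [fderiv_fun_add (hfd.const_mul a) (hgd.const_mul b),
        fderiv_const_mul hfd a, fderiv_const_mul hgd b]
      simp
    rw [hEq.fderiv_eq]
    have hF := diffAt_fderiv_apply hf.self_of_nhds v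
    have hG := diffAt_fderiv_apply hg.self_of_nhds v
    rw [fderiv_fun_add (hF.const_mul a) (hG.const_mul b),
      fderiv_const_mul hF a, fderiv_const_mul hG b]
    simp
  simp only [laplacian, key]
  rw [Finset.mul_sum, Finset.mul_sum, ← Finset.sum_add_distrib]
lemma max_principle {d : ℕ} (Ω : Set (EuclideanSpace ℝ (Fin d)))
    (hΩo : IsOpen Ω) (hΩb : Bornology.IsBounded Ω)
    (V : EuclideanSpace ℝ (Fin d) → ℝ) (hV0 : ∀ x ∈ Ω, 0 ≤ V x)
    (u : EuclideanSpace ℝ (Fin d) → ℝ)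
    (huc : ContinuousOn u (closure Ω)) (hud : ContDiffOn ℝ 2 u Ω)
    (hueq : ∀ x ∈ Ω, -(laplacian u x) + V x * u x = 1)
    (hubc : ∀ x ∈ frontier Ω, u x = 0)
    (w : EuclideanSpace ℝ (Fin d) → ℝ)
    (hwc : ContinuousOn w (closure Ω)) (hwd : ContDiffOn ℝ 2 w Ω)
    (hw : ∀ x ∈ Ω, 0 ≤ -(laplacian w x) + V x * w x)
    (hwb : ∀ x ∈ frontier Ω, 0 ≤ w x) :
    ∀ x ∈ Ω, 0 ≤ w x := by
  intro x hx
  have key : ∀ ε : ℝ, 0 < ε → ∀ y ∈ closure Ω, 0 ≤ w y + ε * u y := by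
    intro ε hε
    set g : EuclideanSpace ℝ (Fin d) → ℝ := fun y => w y + ε * u y with hgdef
    have hgc : ContinuousOn g (closure Ω) := hwc.add (continuousOn_const.mul huc)
    have hK : IsCompact (closure Ω) := hΩb.isCompact_closure
    have hne : (closure Ω).Nonempty := ⟨x, subset_closure hx⟩
    obtain ⟨x₀, hx₀, hmin⟩ := hK.exists_isMinOn hne hgc
    suffices h : 0 ≤ g x₀ by
      intro y hy
      exact le_trans h (hmin hy)
    by_contra hneg
    push_neg at hneg
    have hx₀Ω : x₀ ∈ Ω := by
      by_contra hxf
      have hfr : x₀ ∈ frontier Ω := by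
        rw [hΩo.frontier_eq]
        exact ⟨hx₀, hxf⟩
      have : g x₀ = w x₀ := by simp [hgdef, hubc x₀ hfr]
      rw [this] at hneg
      exact absurd (hwb x₀ hfr) (not_le.mpr hneg)
    have hΩnhds : Ω ∈ 𝓝 x₀ := hΩo.mem_nhds hx₀Ω
    have hlocmin : IsLocalMin g x₀ := by
      have hcl : closure Ω ∈ 𝓝 x₀ := Filter.mem_of_superset hΩnhds subset_closure
      exact Filter.eventually_of_mem hcl fun y hy => hmin hy
    have hwC2 : ∀ᶠ y in 𝓝 x₀, ContDiffAt ℝ 2 w y :=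
      Filter.eventually_of_mem hΩnhds fun y hy => hwd.contDiffAt (hΩo.mem_nhds hy)
    have huC2 : ∀ᶠ y in 𝓝 x₀, ContDiffAt ℝ 2 u y :=
      Filter.eventually_of_mem hΩnhds fun y hy => hud.contDiffAt (hΩo.mem_nhds hy)
    have hgC2 : ∀ᶠ y in 𝓝 x₀, ContDiffAt ℝ 2 g y := by
      filter_upwards [hwC2, huC2] with y h1 h2
      exact h1.add (contDiffAt_const.mul h2)
    have hlap : 0 ≤ laplacian g x₀ := laplacian_nonneg_localMin hgC2 hlocmin
    have hcombo : laplacian g x₀ = 1 * laplacian w x₀ + ε * laplacian u x₀ := by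
      have := laplacian_combo (f := w) (g := u) 1 ε hwC2 huC2
      rw [← this]
      congr 1
      ext y
      simp [hgdef]
    have h1 : 0 ≤ -(laplacian w x₀) + V x₀ * w x₀ := hw x₀ hx₀Ω
    have h2 : -(laplacian u x₀) + V x₀ * u x₀ = 1 := hueq x₀ hx₀Ω
    have h3 : V x₀ * g x₀ ≤ 0 :=
      mul_nonpos_of_nonneg_of_nonpos (hV0 x₀ hx₀Ω) (le_of_lt hneg)
    have hgx : g x₀ = w x₀ + ε * u x₀ := rfl
    have hA : V x₀ * (w x₀ + ε * u x₀) ≤ 0 := hgx ▸ h3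
    have hmul : V x₀ * (w x₀ + ε * u x₀) = V x₀ * w x₀ + ε * (V x₀ * u x₀) := by ring
    have h2' : ε * (-(laplacian u x₀)) + ε * (V x₀ * u x₀) = ε := by
      linear_combination ε * h2
    linarith [h1, hA, hmul, h2', hlap, hcombo, hε]
  have htend : Filter.Tendsto (fun ε : ℝ => w x + ε * u x) (𝓝[>] 0)
      (𝓝 (w x + 0 * u x)) := by
    apply Filter.Tendsto.mono_left _ nhdsWithin_le_nhds
    exact (continuous_const.add ((continuous_id.mul continuous_const))).tendsto 0
  have hge : 0 ≤ w x + 0 * u x := by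
    refine ge_of_tendsto htend ?_
    filter_upwards [self_mem_nhdsWithin] with ε hε
    exact key ε hε x (subset_closure hx)
  simpa using hge

/-- Proposition 1.1, landscape bound: if `-Δψ + Vψ = λψ` in `Ω` with `ψ = 0` on `∂Ω`,
and `-Δu + Vu = 1` in `Ω` with `u = 0` on `∂Ω` (the landscape function), where
`Ω ⊆ ℝ^d` is bounded open, `V ≥ 0` on `Ω` is continuous and `λ ≥ 0`, then
`|ψ(x)| ≤ λ u(x) M` for all `x ∈ Ω`, where `M = sup_{closure Ω} |ψ|`. -/
theorem stmt19 {d : ℕ} (Ω : Set (EuclideanSpace ℝ (Fin d)))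
    (hΩo : IsOpen Ω) (hΩb : Bornology.IsBounded Ω)
    (V : EuclideanSpace ℝ (Fin d) → ℝ) (hVc : Continuous V)
    (hV0 : ∀ x ∈ Ω, 0 ≤ V x)
    (lam : ℝ) (hlam : 0 ≤ lam)
    (ψ u : EuclideanSpace ℝ (Fin d) → ℝ)
    (hψc : ContinuousOn ψ (closure Ω)) (huc : ContinuousOn u (closure Ω))
    (hψd : ContDiffOn ℝ 2 ψ Ω) (hud : ContDiffOn ℝ 2 u Ω)
    (hψeq : ∀ x ∈ Ω, -(laplacian ψ x) + V x * ψ x = lam * ψ x)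
    (hψbc : ∀ x ∈ frontier Ω, ψ x = 0)
    (hueq : ∀ x ∈ Ω, -(laplacian u x) + V x * u x = 1)
    (hubc : ∀ x ∈ frontier Ω, u x = 0) :
    ∀ x ∈ Ω, |ψ x| ≤ lam * u x * sSup ((fun y => |ψ y|) '' closure Ω) := by
  intro x hx
  set M := sSup ((fun y => |ψ y|) '' closure Ω) with hM
  have hK : IsCompact (closure Ω) := hΩb.isCompact_closure
  have hbdd : BddAbove ((fun y => |ψ y|) '' closure Ω) :=
    (hK.image_of_continuousOn hψc.abs).bddAbove
  have hMb : ∀ y ∈ closure Ω, |ψ y| ≤ M := fun y hy => le_csSup hbdd ⟨y, hy, rfl⟩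
  have main : ∀ s : ℝ, |s| = 1 → 0 ≤ lam * M * u x + s * ψ x := by
    intro s hs1
    have hwc : ContinuousOn (fun y => lam * M * u y + s * ψ y) (closure Ω) :=
      (continuousOn_const.mul huc).add (continuousOn_const.mul hψc)
    have hwd : ContDiffOn ℝ 2 (fun y => lam * M * u y + s * ψ y) Ω :=
      (contDiffOn_const.mul hud).add (contDiffOn_const.mul hψd)
    have hweq : ∀ y ∈ Ω,
        0 ≤ -(laplacian (fun y => lam * M * u y + s * ψ y) y)
          + V y * (lam * M * u y + s * ψ y) := by
      intro y hy
      have hΩnhds := hΩo.mem_nhds hy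
      have huC2 : ∀ᶠ z in 𝓝 y, ContDiffAt ℝ 2 u z :=
        Filter.eventually_of_mem hΩnhds fun z hz => hud.contDiffAt (hΩo.mem_nhds hz)
      have hψC2 : ∀ᶠ z in 𝓝 y, ContDiffAt ℝ 2 ψ z :=
        Filter.eventually_of_mem hΩnhds fun z hz => hψd.contDiffAt (hΩo.mem_nhds hz)
      have hwlap : laplacian (fun y => lam * M * u y + s * ψ y) y
          = lam * M * laplacian u y + s * laplacian ψ y :=
        laplacian_combo (lam * M) s huC2 hψC2
      have hueq' := hueq y hy
      have hψeq' := hψeq y hy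
      have hψM : |ψ y| ≤ M := hMb y (subset_closure hy)
      have key : -(laplacian (fun y => lam * M * u y + s * ψ y) y)
          + V y * (lam * M * u y + s * ψ y)
          = lam * M * 1 + s * (lam * ψ y) := by
        rw [hwlap, ← hueq', ← hψeq']; ring
      rw [key]
      have habs : |s * ψ y| ≤ M := by rw [abs_mul, hs1, one_mul]; exact hψM
      have h2 := (abs_le.mp habs).1
      nlinarith [mul_nonneg hlam (by linarith : (0:ℝ) ≤ M + s * ψ y)]
    have hwb : ∀ y ∈ frontier Ω, 0 ≤ lam * M * u y + s * ψ y := by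
      intro y hy
      simp [hubc y hy, hψbc y hy]
    exact max_principle Ω hΩo hΩb V hV0 u huc hud hueq hubc
      (fun y => lam * M * u y + s * ψ y) hwc hwd hweq hwb x hx
  have hp := main 1 (by norm_num)
  have hm := main (-1) (by norm_num)
  rw [abs_le]
  constructor <;> nlinarith [hp, hm]
end
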